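/- If f*: V → W is a linear surjection and S is a maximally g-isotropic (Dirac) subspace of V ⊕ V*, then the push-forward f⃗*S = {(f*X, η) : (X, f*η) ∈ S} is a maximally g-isotropic subspace of W ⊕ W*. -/

import Mathlib

open LinearMap

/-- The neutral metric `g((X,α),(Y,μ)) = (α(Y) + μ(X))/2` on `V ⊕ V*`. -/
noncomputable def neutralMetric (V : Type*) [AddCommGroup V] [Module ℝ V] :
    (V × Module.Dual ℝ V) → (V × Module.Dual ℝ V) → ℝ :=
  fun p q => (p.2 q.1 + q.2 p.1) / 2

/-- The push-forward `f⃗*S = {(f*X, η) : (X, f*η) ∈ S}` of a subspace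
`S ⊆ V ⊕ V*` along a linear map `f : V → W`. -/
noncomputable def Pushforward {V W : Type*} [AddCommGroup V] [Module ℝ V]
    [AddCommGroup W] [Module ℝ W] (f : V →ₗ[ℝ] W)
    (S : Submodule ℝ (V × Module.Dual ℝ V)) :
    Submodule ℝ (W × Module.Dual ℝ W) :=
  Submodule.map (LinearMap.prodMap f LinearMap.id)
    (Submodule.comap (LinearMap.prodMap LinearMap.id f.dualMap) S)

section Aux

/-- The pairing as a bilinear form. -/
noncomputable def nB (V : Type*) [AddCommGroup V] [Module ℝ V] :
    LinearMap.BilinForm ℝ (V × Module.Dual ℝ V) :=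
  LinearMap.mk₂ ℝ (fun p q => p.2 q.1 + q.2 p.1)
    (by intros; simp; ring) (by intros; simp; ring)
    (by intros; simp; ring) (by intros; simp; ring)

@[simp] lemma nB_apply {V : Type*} [AddCommGroup V] [Module ℝ V]
    (p q : V × Module.Dual ℝ V) : nB V p q = p.2 q.1 + q.2 p.1 := rfl

lemma nB_isRefl (V : Type*) [AddCommGroup V] [Module ℝ V] : (nB V).IsRefl := by
  intro p q h; simpa [add_comm] using h

lemma nB_nondeg (V : Type*) [AddCommGroup V] [Module ℝ V] [FiniteDimensional ℝ V] :
    (nB V).Nondegenerate := by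
  suffices hL : ∀ p : V × Module.Dual ℝ V, (∀ q, nB V p q = 0) → p = 0 from
    ⟨hL, fun p hp => hL p fun q => by simpa [add_comm] using hp q⟩
  intro p hp
  have h1 : p.2 = 0 := by
    ext Y; simpa using hp (Y, 0)
  have h2 : p.1 = 0 := by
    rw [← Module.forall_dual_apply_eq_zero_iff ℝ p.1]
    intro φ; simpa [h1] using hp (0, φ)
  exact Prod.ext h2 h1

/-- rank-nullity for `Submodule.map`. -/
lemma finrank_map_add {K M N : Type*} [Field K] [AddCommGroup M] [Module K M]
    [AddCommGroup N] [Module K N] (g : M →ₗ[K] N) (T : Submodule K M)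
    [FiniteDimensional K M] :
    Module.finrank K (Submodule.map g T) + Module.finrank K (T ⊓ ker g : Submodule K M)
      = Module.finrank K T := by
  have h := LinearMap.finrank_range_add_finrank_ker (g ∘ₗ T.subtype)
  rw [LinearMap.range_comp, Submodule.range_subtype] at h
  rw [LinearMap.ker_comp] at h
  rwa [← Submodule.finrank_map_subtype_eq T (Submodule.comap T.subtype (ker g)),
    Submodule.map_comap_subtype] at h

lemma orthogonal_sup {K M : Type*} [Field K] [AddCommGroup M] [Module K M]
    (B : LinearMap.BilinForm K M) (S U : Submodule K M) :
    B.orthogonal (S ⊔ U) = B.orthogonal S ⊓ B.orthogonal U := by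
  apply le_antisymm
  · exact le_inf (B.orthogonal_le le_sup_left) (B.orthogonal_le le_sup_right)
  · rintro x ⟨hS, hU⟩ n hn
    obtain ⟨p, hp, q, hq, rfl⟩ := Submodule.mem_sup.mp hn
    have h1 := hS p hp
    have h2 := hU q hq
    simp only [LinearMap.BilinForm.IsOrtho, map_add, LinearMap.add_apply] at *
    simp [h1, h2]

end Aux

/-- The push-forward of a maximally `g`-isotropic (Dirac) subspace of `V ⊕ V*`
along a linear surjection `f : V → W` is a maximally `g`-isotropic subspace of
`W ⊕ W*`. -/
theorem pushforward_dirac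
    (V W : Type*) [AddCommGroup V] [Module ℝ V] [FiniteDimensional ℝ V]
    [AddCommGroup W] [Module ℝ W] [FiniteDimensional ℝ W]
    (f : V →ₗ[ℝ] W) (hf : Function.Surjective f)
    (S : Submodule ℝ (V × Module.Dual ℝ V))
    (hiso : ∀ p ∈ S, ∀ q ∈ S, neutralMetric V p q = 0)
    (hmax : Module.finrank ℝ S = Module.finrank ℝ V) :
    (∀ p ∈ Pushforward f S, ∀ q ∈ Pushforward f S, neutralMetric W p q = 0) ∧
    Module.finrank ℝ (Pushforward f S) = Module.finrank ℝ W := by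
  constructor
  · rintro p hp q hq
    obtain ⟨⟨X, η⟩, hXη, rfl⟩ := hp
    obtain ⟨⟨Y, μ⟩, hYμ, rfl⟩ := hq
    have := hiso _ hXη _ hYμ
    simpa [neutralMetric, LinearMap.dualMap_apply] using this
  · -- notation
    set n := Module.finrank ℝ V with hn
    set m := Module.finrank ℝ W with hm
    have hrefl := nB_isRefl V
    have hnd := nB_nondeg V
    -- total dimension
    have htot : Module.finrank ℝ (V × Module.Dual ℝ V) = n + n := by
      rw [Module.finrank_prod, Subspace.dual_finrank_eq]
    have htot' : Module.finrank ℝ (V × Module.Dual ℝ W) = n + m := by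
      rw [Module.finrank_prod, Subspace.dual_finrank_eq]
    -- S is self-orthogonal
    have hSle : S ≤ (nB V).orthogonal S := by
      intro p hp q hq
      have h := hiso q hq p hp
      have : (q.2 p.1 + p.2 q.1) = 0 := by
        simp only [neutralMetric] at h; linarith
      simpa [LinearMap.BilinForm.IsOrtho] using this
    have horthdim : ∀ W' : Submodule ℝ (V × Module.Dual ℝ V),
        Module.finrank ℝ W' + Module.finrank ℝ ((nB V).orthogonal W') = n + n := by
      intro W'
      have h := LinearMap.BilinForm.finrank_add_finrank_orthogonal (B := nB V) hrefl W'
      rwa [LinearMap.BilinForm.orthogonal_top_eq_bot hnd, inf_bot_eq, finrank_bot,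
        add_zero, htot] at h
    have hSeq : (nB V).orthogonal S = S := by
      refine (Submodule.eq_of_le_of_finrank_eq hSle ?_).symm
      have := horthdim S
      omega
    -- the comparison map φ and its range U
    set φ : (V × Module.Dual ℝ W) →ₗ[ℝ] (V × Module.Dual ℝ V) :=
      LinearMap.prodMap LinearMap.id f.dualMap with hφ
    have hdinj : Function.Injective f.dualMap :=
      LinearMap.dualMap_injective_of_surjective hf
    have hφinj : Function.Injective φ := by
      rw [hφ, LinearMap.coe_prodMap]
      exact Function.Injective.prodMap (fun a b h => h) hdinj
    set U : Submodule ℝ (V × Module.Dual ℝ V) := LinearMap.range φ with hU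
    have hUdim : Module.finrank ℝ U = n + m := by
      rw [hU, LinearMap.finrank_range_of_inj hφinj, htot']
    -- kp = ker f × 0
    set kp : Submodule ℝ (V × Module.Dual ℝ V) :=
      (LinearMap.ker f).prod ⊥ with hkp
    have hkpU : kp ≤ U := by
      rintro ⟨X, α⟩ ⟨hX, hα⟩
      simp only [SetLike.mem_coe, Submodule.mem_bot] at hα
      subst hα
      exact ⟨(X, 0), by simp [φ, Prod.ext_iff]⟩
    -- orthogonal of U is kp
    have horthU : (nB V).orthogonal U = kp := by
      ext ⟨Y, μ⟩
      constructor
      · intro h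
        have hμ : μ = 0 := by
          ext X
          have := h (X, 0) ⟨(X, 0), by simp [φ, Prod.ext_iff]⟩
          simpa [LinearMap.BilinForm.IsOrtho] using this
        have hY : f Y = 0 := by
          rw [← Module.forall_dual_apply_eq_zero_iff ℝ (f Y)]
          intro η
          have := h (0, f.dualMap η) ⟨(0, η), by simp [φ, Prod.ext_iff]⟩
          simpa [LinearMap.BilinForm.IsOrtho, hμ] using this
        exact ⟨hY, by simp [hμ]⟩
      · rintro ⟨hY, hμ⟩ q hq
        obtain ⟨⟨X, η⟩, rfl⟩ := hq
        have hμ0 : μ = 0 := (Submodule.mem_bot ℝ).mp hμ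
        simp [LinearMap.BilinForm.IsOrtho, φ, hμ0, LinearMap.mem_ker.mp hY]
    -- K
    set K : Submodule ℝ (V × Module.Dual ℝ V) := S ⊓ kp with hK
    have hsup : (nB V).orthogonal (S ⊔ U) = K := by
      rw [orthogonal_sup, hSeq, horthU]
    have hsupdim : Module.finrank ℝ (S ⊔ U : Submodule ℝ _) + Module.finrank ℝ K = n + n := by
      have := horthdim (S ⊔ U)
      rwa [hsup] at this
    -- Grassmann
    have hgrass := Submodule.finrank_sup_add_finrank_inf_eq S U
    -- T and its dimension
    set T : Submodule ℝ (V × Module.Dual ℝ W) := Submodule.comap φ S with hT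
    have hmapT : Submodule.map φ T = S ⊓ U := by
      rw [hT, Submodule.map_comap_eq, ← hU, inf_comm]
    have hTdim : Module.finrank ℝ T = Module.finrank ℝ (S ⊓ U : Submodule ℝ _) := by
      have h := finrank_map_add φ T
      rw [hmapT, LinearMap.ker_eq_bot.mpr hφinj, inf_bot_eq, finrank_bot, add_zero] at h
      exact h.symm
    -- the quotient map g
    set g : (V × Module.Dual ℝ W) →ₗ[ℝ] (W × Module.Dual ℝ W) :=
      LinearMap.prodMap f LinearMap.id with hg
    have hkerg : LinearMap.ker g = (LinearMap.ker f).prod ⊥ := by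
      rw [hg, LinearMap.ker_prodMap, LinearMap.ker_id]
    -- map φ of T ⊓ ker g is K
    have hmapker : Submodule.map φ (T ⊓ LinearMap.ker g) = K := by
      rw [Submodule.map_inf φ hφinj, hmapT, hkerg]
      have : Submodule.map φ ((LinearMap.ker f).prod ⊥) = kp := by
        ext ⟨Y, μ⟩
        constructor
        · rintro ⟨⟨X, η⟩, ⟨hX, hη⟩, h⟩
          simp only [SetLike.mem_coe, Submodule.mem_bot] at hη
          obtain ⟨h1, h2⟩ := Prod.ext_iff.mp h
          simp only [φ, LinearMap.prodMap_apply, LinearMap.id_apply] at h1 h2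
          subst h1
          rw [hη, map_zero] at h2
          exact ⟨hX, by simp [← h2]⟩
        · rintro ⟨hY, hμ⟩
          simp only [SetLike.mem_coe, Submodule.mem_bot] at hμ
          subst hμ
          exact ⟨(Y, 0), ⟨hY, by simp⟩, by simp [φ, Prod.ext_iff]⟩
      rw [this, hK, inf_assoc, inf_eq_right.mpr hkpU]
    have hKdim : Module.finrank ℝ (T ⊓ LinearMap.ker g : Submodule ℝ _)
        = Module.finrank ℝ K := by
      have h := finrank_map_add φ (T ⊓ LinearMap.ker g)
      rw [hmapker, LinearMap.ker_eq_bot.mpr hφinj, inf_bot_eq, finrank_bot,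
        add_zero] at h
      exact h.symm
    -- rank-nullity for the pushforward
    have hpush := finrank_map_add g T
    have : Pushforward f S = Submodule.map g T := rfl
    rw [this]
    omega
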